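/- Let S be an ordered feasible schedule in which jobs j_1,…,j_k (k > 1) execute consecutively on a shared processor M_r, each j_ℓ in a single interval whose right endpoint is f_{j_ℓ}(S) and where the start of j_ℓ equals f_{j_{ℓ−1}}(S) for ℓ ≥ 2. Let i ∈ {2,…,k} be such that f_{j_ℓ}(S) = c_{j_ℓ} for every ℓ ∈ {i,…,k}, and let 0 < ε ≤ (length of the shared interval of j_{i−1}). Define S' by: S' agrees with S on M_r before time (start of j_i) − ε; the shared completion of j_{i−1} becomes f_{j_{i−1}}(S) − ε and its private completion becomes c_{j_{i−1}} + ε; for each ℓ = i,…,k in increasing order, the shared interval of j_ℓ starts at the new shared completion of j_{ℓ−1}, its shared completion becomes f_{j_ℓ}(S) − ε/2^{ℓ−i+1} and its private completion becomes c_{j_ℓ} − ε/2^{ℓ−i+1}; S' coincides with S on all other processors. Then S' is a feasible schedule and Ω(S') = Ω(S) − ε·w_{j_{i−1}} + ε·Σ_{ℓ=i}^{k} w_{j_ℓ}/2^{ℓ−i+1}. -/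

import Mathlib

/-- A feasible schedule for a shared multi-processor instance: jobs `J` with
processing times `p`, `m` shared processors.  Each job `j` gets a shared
processor `mu j`, a finite set `iv j` of pairwise disjoint open bounded
subintervals of `(0,∞)` (represented by their endpoint pairs) on which `j`
executes on processor `mu j`, and a private completion time `c j ≥ 0` so that
`j` executes on its private processor exactly in `(0, c j)`.  The private time
plus the total length of the shared intervals equals `p j`, and intervals of
distinct jobs on a common shared processor are disjoint. -/
structure Schedule (J : Type) [Fintype J] [DecidableEq J] (m : ℕ) (p : J → ℝ) where
  mu : J → Fin m
  iv : J → Finset (ℝ × ℝ)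
  c : J → ℝ
  c_nonneg : ∀ j, 0 ≤ c j
  iv_valid : ∀ j, ∀ q ∈ iv j, 0 ≤ q.1 ∧ q.1 ≤ q.2
  iv_disjoint : ∀ j, ∀ q ∈ iv j, ∀ q' ∈ iv j, q ≠ q' → q.2 ≤ q'.1 ∨ q'.2 ≤ q.1
  total : ∀ j, c j + ∑ q ∈ iv j, (q.2 - q.1) = p j
  shared_disjoint : ∀ j j', j ≠ j' → mu j = mu j' →
    ∀ q ∈ iv j, ∀ q' ∈ iv j', q.2 ≤ q'.1 ∨ q'.2 ≤ q.1

namespace Schedule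

variable {J : Type} [Fintype J] [DecidableEq J] {m : ℕ} {p : J → ℝ}

/-- The overlap `t_j` of job `j`: total length of `(0, c j) ∩ ⋃ (iv j)`. -/
noncomputable def overlap (S : Schedule J m p) (j : J) : ℝ :=
  ∑ q ∈ S.iv j, max 0 (min (S.c j) q.2 - q.1)

/-- Total weighted overlap `Ω(S) = Σ_j w_j t_j`. -/
noncomputable def Omega (S : Schedule J m p) (w : J → ℝ) : ℝ :=
  ∑ j, w j * S.overlap j

/-- Completion time of `j` on its shared processor: the supremum of right
endpoints of its shared intervals, `0` if there are none. -/
noncomputable def ftime (S : Schedule J m p) (j : J) : ℝ :=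
  WithBot.unbotD 0 ((S.iv j).image Prod.snd).max

/-- A schedule is normal if every job completes on the shared processor no
later than on its private processor. -/
def Normal (S : Schedule J m p) : Prop := ∀ j, S.ftime j ≤ S.c j

/-- A schedule is optimal if it maximizes the total weighted overlap. -/
def Optimal (S : Schedule J m p) (w : J → ℝ) : Prop :=
  ∀ S' : Schedule J m p, S'.Omega w ≤ S.Omega w

end Schedule

/-- A schedule is non-preemptive if each job uses at most one shared interval. -/
def Schedule.NonPreemptive {J : Type} [Fintype J] [DecidableEq J] {m : ℕ} {p : J → ℝ}
    (S : Schedule J m p) : Prop :=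
  ∀ j, (S.iv j).card ≤ 1

/-- A schedule is ordered if it is normal, non-preemptive, and for any two jobs
on the same shared processor the order of shared completion times agrees with
the order of private completion times. -/
def Schedule.Ordered {J : Type} [Fintype J] [DecidableEq J] {m : ℕ} {p : J → ℝ}
    (S : Schedule J m p) : Prop :=
  S.Normal ∧ S.NonPreemptive ∧
    ∀ j j', S.mu j = S.mu j' → (S.ftime j ≤ S.ftime j' ↔ S.c j ≤ S.c j')

open Classical in
noncomputable def pullData {J α : Type} (js : ℕ → J) (k : ℕ) (F : ℕ → α) (G : J → α) : J → α :=
  fun j => if h : ∃ ℓ, ℓ < k ∧ j = js ℓ then F h.choose else G j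

theorem pullData_pos {J α : Type} {js : ℕ → J} {k : ℕ}
    (hinj : ∀ ℓ < k, ∀ ℓ' < k, js ℓ = js ℓ' → ℓ = ℓ')
    (F : ℕ → α) (G : J → α) {ℓ : ℕ} (hℓ : ℓ < k) :
    pullData js k F G (js ℓ) = F ℓ := by
  have h : ∃ ℓ', ℓ' < k ∧ js ℓ = js ℓ' := ⟨ℓ, hℓ, rfl⟩
  simp only [pullData, dif_pos h]
  congr 1
  exact hinj _ h.choose_spec.1 _ hℓ h.choose_spec.2.symm

theorem pullData_neg {J α : Type} {js : ℕ → J} {k : ℕ}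
    (F : ℕ → α) (G : J → α) {j : J} (hj : ∀ ℓ < k, j ≠ js ℓ) :
    pullData js k F G j = G j := by
  simp only [pullData]
  rw [dif_neg]
  rintro ⟨ℓ, hℓ, e⟩
  exact hj ℓ hℓ e

theorem Schedule.ftime_singleton {J : Type} [Fintype J] [DecidableEq J] {m : ℕ} {p : J → ℝ}
    (S : Schedule J m p) {j : J} {x y : ℝ}
    (h : S.iv j = {(x, y)}) : S.ftime j = y := by
  simp [Schedule.ftime, h]

theorem Schedule.overlap_singleton {J : Type} [Fintype J] [DecidableEq J] {m : ℕ} {p : J → ℝ}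
    (S : Schedule J m p) {j : J} {x y : ℝ}
    (h : S.iv j = {(x, y)}) : S.overlap j = max 0 (min (S.c j) y - x) := by
  simp [Schedule.overlap, h]

/-- **pulling.** Let `S` be an ordered feasible schedule in which
jobs `js 0, …, js (k-1)` (`k > 1`) execute consecutively on the shared
processor `r`, job `js ℓ` in a single interval `(a ℓ, f_{js ℓ}(S))` with
`a (ℓ+1) = f_{js ℓ}(S)`.  Let `i` (`1 ≤ i < k`, so that `js i` is the
(1-indexed) `(i+1)`-st job) be such that `f_{js ℓ}(S) = c_{js ℓ}` for all
`ℓ ∈ {i, …, k-1}`, and let `0 < ε ≤` length of the shared interval of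
`js (i-1)`.  Then pulling of `js i` by `ε` yields a feasible schedule `S'`
(described by the listed interval data) with
`Ω(S') = Ω(S) - ε·w (js (i-1)) + ε·Σ_{ℓ=i}^{k-1} w (js ℓ) / 2^(ℓ-i+1)`. -/
theorem pulling_produces_feasible_schedule
    {J : Type} [Fintype J] [DecidableEq J] {m : ℕ} (hm : 1 ≤ m)
    (p w : J → ℝ) (hp : ∀ j, 0 < p j) (hw : ∀ j, 0 < w j)
    (S : Schedule J m p) (hord : S.Ordered)
    (r : Fin m) (k : ℕ) (hk : 2 ≤ k)
    (js : ℕ → J) (a : ℕ → ℝ)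
    (hinj : ∀ ℓ < k, ∀ ℓ' < k, js ℓ = js ℓ' → ℓ = ℓ')
    (hmu : ∀ ℓ < k, S.mu (js ℓ) = r)
    (honly : ∀ j, S.mu j = r → S.iv j ≠ ∅ → ∃ ℓ < k, j = js ℓ)
    (hiv : ∀ ℓ < k, S.iv (js ℓ) = {(a ℓ, S.ftime (js ℓ))})
    (hconsec : ∀ ℓ, ℓ + 1 < k → a (ℓ + 1) = S.ftime (js ℓ))
    (i : ℕ) (hi1 : 1 ≤ i) (hik : i < k)
    (hsync : ∀ ℓ, i ≤ ℓ → ℓ < k → S.ftime (js ℓ) = S.c (js ℓ))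
    (ε : ℝ) (hε : 0 < ε) (hε2 : ε ≤ S.ftime (js (i - 1)) - a (i - 1)) :
    ∃ S' : Schedule J m p,
      S'.mu = S.mu ∧
      (∀ j, (∀ ℓ < k, j ≠ js ℓ) → S'.iv j = S.iv j ∧ S'.c j = S.c j) ∧
      (∀ ℓ, ℓ + 1 < i → S'.iv (js ℓ) = S.iv (js ℓ) ∧ S'.c (js ℓ) = S.c (js ℓ)) ∧
      (S'.iv (js (i - 1)) = {(a (i - 1), S.ftime (js (i - 1)) - ε)} ∧
        S'.c (js (i - 1)) = S.c (js (i - 1)) + ε) ∧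
      (∀ ℓ, i ≤ ℓ → ℓ < k →
        S'.iv (js ℓ)
            = {(S'.ftime (js (ℓ - 1)), S.ftime (js ℓ) - ε / 2 ^ (ℓ - i + 1))} ∧
        S'.c (js ℓ) = S.c (js ℓ) - ε / 2 ^ (ℓ - i + 1)) ∧
      S'.Omega w = S.Omega w - ε * w (js (i - 1))
          + ε * ∑ ℓ ∈ Finset.Ico i k, w (js ℓ) / 2 ^ (ℓ - i + 1) := by
  classical
  obtain ⟨t, rfl⟩ : ∃ t, i = t + 1 := ⟨i - 1, by omega⟩
  simp only [Nat.add_sub_cancel] at hε2 ⊢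
  have htk : t + 1 < k := hik
  have hnorm : S.Normal := hord.1
  -- basic facts about the old schedule
  have hfa : ∀ ℓ, ℓ < k → 0 ≤ a ℓ ∧ a ℓ ≤ S.ftime (js ℓ) := by
    intro ℓ h
    exact S.iv_valid (js ℓ) (a ℓ, S.ftime (js ℓ))
      (by rw [hiv ℓ h]; exact Finset.mem_singleton_self _)
  have hcons : ∀ ℓ, 0 < ℓ → ℓ < k → a ℓ = S.ftime (js (ℓ - 1)) := by
    intro ℓ h1 h2
    have := hconsec (ℓ - 1) (by omega)
    rwa [Nat.sub_add_cancel h1] at this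
  have hfmono : ∀ ℓ, 0 < ℓ → ℓ < k → S.ftime (js (ℓ - 1)) ≤ S.ftime (js ℓ) := by
    intro ℓ h1 h2
    rw [← hcons ℓ h1 h2]; exact (hfa ℓ h2).2
  have hTot : ∀ ℓ, ℓ < k → S.c (js ℓ) + (S.ftime (js ℓ) - a ℓ) = p (js ℓ) := by
    intro ℓ h
    have := S.total (js ℓ)
    rwa [hiv ℓ h, Finset.sum_singleton] at this
  -- the new data
  set δ : ℕ → ℝ := fun ℓ => ε / 2 ^ (ℓ - (t + 1) + 1) with hδdef
  set E : ℕ → ℝ := fun ℓ =>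
    if ℓ < t then S.ftime (js ℓ) else if ℓ = t then S.ftime (js t) - ε
      else S.ftime (js ℓ) - δ ℓ with hEdef
  set B : ℕ → ℝ := fun ℓ => if ℓ ≤ t then a ℓ else E (ℓ - 1) with hBdef
  set cE : ℕ → ℝ := fun ℓ =>
    if ℓ < t then S.c (js ℓ) else if ℓ = t then S.c (js t) + ε
      else S.c (js ℓ) - δ ℓ with hcEdef
  have hδpos : ∀ ℓ, 0 < δ ℓ := by
    intro ℓ; simp only [hδdef]; positivity
  have hδ2 : ∀ ℓ, t + 1 < ℓ → δ (ℓ - 1) = 2 * δ ℓ := by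
    intro ℓ h
    simp only [hδdef]
    have he : ℓ - (t + 1) + 1 = (ℓ - 1 - (t + 1) + 1) + 1 := by omega
    rw [he, pow_succ]
    have h2 : (2:ℝ) ^ (ℓ - 1 - (t + 1) + 1) ≠ 0 := by positivity
    field_simp
    rw [pow_succ, pow_succ]
    ring
  have hδt : δ (t + 1) = ε / 2 := by
    simp only [hδdef, Nat.sub_self]
    norm_num
  have hElt : ∀ ℓ, ℓ < t → E ℓ = S.ftime (js ℓ) := by
    intro ℓ h; simp only [hEdef]; rw [if_pos h]
  have hEt : E t = S.ftime (js t) - ε := by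
    simp only [hEdef]; simp
  have hEgt : ∀ ℓ, t < ℓ → E ℓ = S.ftime (js ℓ) - δ ℓ := by
    intro ℓ h; simp only [hEdef]; rw [if_neg (by omega), if_neg (by omega)]
  have hBle : ∀ ℓ, ℓ ≤ t → B ℓ = a ℓ := by
    intro ℓ h; simp only [hBdef]; rw [if_pos h]
  have hBgt : ∀ ℓ, t < ℓ → B ℓ = E (ℓ - 1) := by
    intro ℓ h; simp only [hBdef]; rw [if_neg (by omega)]
  have hcElt : ∀ ℓ, ℓ < t → cE ℓ = S.c (js ℓ) := by
    intro ℓ h; simp only [hcEdef]; rw [if_pos h]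
  have hcEt : cE t = S.c (js t) + ε := by
    simp only [hcEdef]; simp
  have hcEgt : ∀ ℓ, t < ℓ → cE ℓ = S.c (js ℓ) - δ ℓ := by
    intro ℓ h; simp only [hcEdef]; rw [if_neg (by omega), if_neg (by omega)]
  -- interval endpoint facts
  have hBE : ∀ ℓ, ℓ < k → B ℓ ≤ E ℓ := by
    intro ℓ hℓ
    rcases lt_trichotomy ℓ t with h | rfl | h
    · rw [hBle ℓ h.le, hElt ℓ h]; exact (hfa ℓ hℓ).2
    · rw [hBle ℓ le_rfl, hEt]; linarith
    · rw [hBgt ℓ h, hEgt ℓ h]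
      have hf1 : S.ftime (js (ℓ - 1)) ≤ S.ftime (js ℓ) := hfmono ℓ (by omega) hℓ
      have hδp := hδpos ℓ
      by_cases h' : ℓ = t + 1
      · subst h'
        simp only [Nat.add_sub_cancel] at hf1 ⊢
        rw [hEt, hδt]
        linarith
      · rw [hEgt (ℓ - 1) (by omega), hδ2 ℓ (by omega)]
        linarith
  have hEB : ∀ ℓ, ℓ + 1 < k → E ℓ = B (ℓ + 1) := by
    intro ℓ h
    rcases lt_or_ge ℓ t with h' | h'
    · rw [hElt ℓ h', hBle (ℓ + 1) (by omega), hconsec ℓ h]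
    · rw [hBgt (ℓ + 1) (by omega), Nat.add_sub_cancel]
  have hB0 : ∀ ℓ, ℓ < k → 0 ≤ B ℓ := by
    intro ℓ
    induction ℓ using Nat.strong_induction_on with
    | _ ℓ ih =>
      intro hℓ
      rcases le_or_gt ℓ t with h | h
      · rw [hBle ℓ h]; exact (hfa ℓ hℓ).1
      · rw [hBgt ℓ h]
        have h1 : ℓ - 1 < k := by omega
        exact le_trans (ih (ℓ - 1) (by omega) h1) (hBE (ℓ - 1) h1)
  have hchain : ∀ ℓ ℓ', ℓ < ℓ' → ℓ' < k → E ℓ ≤ B ℓ' := by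
    intro ℓ ℓ' hlt hk'
    induction ℓ' with
    | zero => omega
    | succ n ih =>
      rcases Nat.lt_succ_iff_lt_or_eq.mp hlt with h | h
      · calc E ℓ ≤ B n := ih h (by omega)
          _ ≤ E n := hBE n (by omega)
          _ = B (n + 1) := hEB n hk'
      · rw [h]; exact (hEB n hk').le
  have htot : ∀ ℓ, ℓ < k → cE ℓ + (E ℓ - B ℓ) = p (js ℓ) := by
    intro ℓ hℓ
    have h0 := hTot ℓ hℓ
    rcases lt_trichotomy ℓ t with h | rfl | h
    · rw [hcElt ℓ h, hElt ℓ h, hBle ℓ h.le]; linarith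
    · rw [hcEt, hEt, hBle ℓ le_rfl]; linarith
    · rw [hcEgt ℓ h, hEgt ℓ h, hBgt ℓ h]
      have ha : a ℓ = S.ftime (js (ℓ - 1)) := hcons ℓ (by omega) hℓ
      by_cases h' : ℓ = t + 1
      · subst h'
        simp only [Nat.add_sub_cancel] at ha ⊢
        rw [hEt, hδt]
        linarith
      · rw [hEgt (ℓ - 1) (by omega), hδ2 ℓ (by omega)]
        linarith
  have hsyncE : ∀ ℓ, t < ℓ → ℓ < k → cE ℓ = E ℓ := by
    intro ℓ h hℓ
    rw [hcEgt ℓ h, hEgt ℓ h, hsync ℓ (by omega) hℓ]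
  have hcE0 : ∀ ℓ, ℓ < k → 0 ≤ cE ℓ := by
    intro ℓ hℓ
    rcases lt_trichotomy ℓ t with h | rfl | h
    · rw [hcElt ℓ h]; exact S.c_nonneg _
    · rw [hcEt]; have := S.c_nonneg (js ℓ); linarith
    · rw [hsyncE ℓ h hℓ]; exact le_trans (hB0 ℓ hℓ) (hBE ℓ hℓ)
  -- the new schedule data
  set ivN : J → Finset (ℝ × ℝ) := pullData js k (fun ℓ => {(B ℓ, E ℓ)}) S.iv with hivNdef
  set cN : J → ℝ := pullData js k cE S.c with hcNdef
  have hivP : ∀ ℓ, ℓ < k → ivN (js ℓ) = {(B ℓ, E ℓ)} := fun ℓ h => pullData_pos hinj _ _ h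
  have hivNg : ∀ j, (∀ ℓ < k, j ≠ js ℓ) → ivN j = S.iv j := fun j h => pullData_neg _ _ h
  have hcP : ∀ ℓ, ℓ < k → cN (js ℓ) = cE ℓ := fun ℓ h => pullData_pos hinj _ _ h
  have hcNg : ∀ j, (∀ ℓ < k, j ≠ js ℓ) → cN j = S.c j := fun j h => pullData_neg _ _ h
  -- the structure fields
  have hc_nonneg : ∀ j, 0 ≤ cN j := by
    intro j
    by_cases hj : ∃ ℓ, ℓ < k ∧ j = js ℓ
    · obtain ⟨ℓ, hℓ, rfl⟩ := hj
      rw [hcP ℓ hℓ]; exact hcE0 ℓ hℓ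
    · push_neg at hj
      rw [hcNg j hj]; exact S.c_nonneg j
  have hiv_valid : ∀ j, ∀ q ∈ ivN j, 0 ≤ q.1 ∧ q.1 ≤ q.2 := by
    intro j q hq
    by_cases hj : ∃ ℓ, ℓ < k ∧ j = js ℓ
    · obtain ⟨ℓ, hℓ, rfl⟩ := hj
      rw [hivP ℓ hℓ, Finset.mem_singleton] at hq
      subst hq
      exact ⟨hB0 ℓ hℓ, hBE ℓ hℓ⟩
    · push_neg at hj
      rw [hivNg j hj] at hq
      exact S.iv_valid j q hq
  have hiv_dis : ∀ j, ∀ q ∈ ivN j, ∀ q' ∈ ivN j, q ≠ q' → q.2 ≤ q'.1 ∨ q'.2 ≤ q.1 := by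
    intro j q hq q' hq' hne
    by_cases hj : ∃ ℓ, ℓ < k ∧ j = js ℓ
    · obtain ⟨ℓ, hℓ, rfl⟩ := hj
      rw [hivP ℓ hℓ, Finset.mem_singleton] at hq hq'
      exact absurd (hq.trans hq'.symm) hne
    · push_neg at hj
      rw [hivNg j hj] at hq hq'
      exact S.iv_disjoint j q hq q' hq' hne
  have htotal : ∀ j, cN j + ∑ q ∈ ivN j, (q.2 - q.1) = p j := by
    intro j
    by_cases hj : ∃ ℓ, ℓ < k ∧ j = js ℓ
    · obtain ⟨ℓ, hℓ, rfl⟩ := hj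
      rw [hcP ℓ hℓ, hivP ℓ hℓ, Finset.sum_singleton]
      exact htot ℓ hℓ
    · push_neg at hj
      rw [hcNg j hj, hivNg j hj]
      exact S.total j
  have hshared : ∀ j j', j ≠ j' → S.mu j = S.mu j' →
      ∀ q ∈ ivN j, ∀ q' ∈ ivN j', q.2 ≤ q'.1 ∨ q'.2 ≤ q.1 := by
    have himp : ∀ j₀ (j₁ : J), S.mu j₀ = r → (∀ ℓ < k, j₁ ≠ js ℓ) → S.mu j₀ = S.mu j₁ →
        ∀ q₁ ∈ ivN j₁, False := by
      intro j₀ j₁ h0 h1 hmu₁ q₁ hq₁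
      rw [hivNg j₁ h1] at hq₁
      obtain ⟨ℓ', hℓ', he⟩ := honly j₁ (by rw [← hmu₁, h0]) (Finset.ne_empty_of_mem hq₁)
      exact h1 ℓ' hℓ' he
    intro j j' hne hmu' q hq q' hq'
    by_cases hj : ∃ ℓ, ℓ < k ∧ j = js ℓ
    · obtain ⟨ℓ, hℓ, rfl⟩ := hj
      by_cases hj' : ∃ ℓ', ℓ' < k ∧ j' = js ℓ'
      · obtain ⟨ℓ', hℓ', rfl⟩ := hj'
        rw [hivP ℓ hℓ, Finset.mem_singleton] at hq
        rw [hivP ℓ' hℓ', Finset.mem_singleton] at hq'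
        subst hq; subst hq'
        rcases lt_trichotomy ℓ ℓ' with h | h | h
        · exact Or.inl (hchain ℓ ℓ' h hℓ')
        · exact absurd (congrArg js h) hne
        · exact Or.inr (hchain ℓ' ℓ h hℓ)
      · push_neg at hj'
        exact (himp (js ℓ) j' (hmu ℓ hℓ) hj' hmu' q' hq').elim
    · push_neg at hj
      by_cases hj' : ∃ ℓ', ℓ' < k ∧ j' = js ℓ'
      · obtain ⟨ℓ', hℓ', rfl⟩ := hj'
        exact (himp (js ℓ') j (hmu ℓ' hℓ') hj hmu'.symm q hq).elim
      · push_neg at hj'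
        rw [hivNg j hj] at hq
        rw [hivNg j' hj'] at hq'
        exact S.shared_disjoint j j' hne hmu' q hq q' hq'
  set S' : Schedule J m p :=
    ⟨S.mu, ivN, cN, hc_nonneg, hiv_valid, hiv_dis, htotal, hshared⟩ with hS'def
  have hS'iv : S'.iv = ivN := rfl
  have hS'c : S'.c = cN := rfl
  refine ⟨S', rfl, ?_, ?_, ?_, ?_, ?_⟩
  · intro j hj
    exact ⟨by rw [hS'iv, hivNg j hj], by rw [hS'c, hcNg j hj]⟩
  · intro ℓ hℓ
    have h : ℓ < t := by omega
    have hℓk : ℓ < k := by omega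
    constructor
    · rw [hS'iv, hivP ℓ hℓk, hBle ℓ h.le, hElt ℓ h, hiv ℓ hℓk]
    · rw [hS'c, hcP ℓ hℓk, hcElt ℓ h]
  · constructor
    · rw [hS'iv, hivP t (by omega), hBle t le_rfl, hEt]
    · rw [hS'c, hcP t (by omega), hcEt]
  · intro ℓ h1 h2
    have hℓ1k : ℓ - 1 < k := by omega
    have hft : S'.ftime (js (ℓ - 1)) = E (ℓ - 1) :=
      Schedule.ftime_singleton S' (by rw [hS'iv]; exact hivP (ℓ - 1) hℓ1k)
    constructor
    · rw [hft, hS'iv, hivP ℓ h2, ← hBgt ℓ (by omega), hEgt ℓ (by omega)]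
    · rw [hS'c, hcP ℓ h2, hcEgt ℓ (by omega)]
  · -- Omega computation
    set Δ : ℕ → ℝ := fun ℓ => if ℓ < t then 0 else if ℓ = t then -ε else δ ℓ with hΔdef
    have hΔlt : ∀ ℓ, ℓ < t → Δ ℓ = 0 := by
      intro ℓ h; simp only [hΔdef]; rw [if_pos h]
    have hΔt : Δ t = -ε := by
      simp only [hΔdef]; simp
    have hΔgt : ∀ ℓ, t < ℓ → Δ ℓ = δ ℓ := by
      intro ℓ h; simp only [hΔdef]; rw [if_neg (by omega), if_neg (by omega)]
    have hover : ∀ ℓ, ℓ < k → S'.overlap (js ℓ) = S.overlap (js ℓ) + Δ ℓ := by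
      intro ℓ hℓ
      have hOld : S.overlap (js ℓ) = max 0 (min (S.c (js ℓ)) (S.ftime (js ℓ)) - a ℓ) :=
        Schedule.overlap_singleton S (hiv ℓ hℓ)
      have hNew : S'.overlap (js ℓ) = max 0 (min (S'.c (js ℓ)) (E ℓ) - B ℓ) :=
        Schedule.overlap_singleton S' (by rw [hS'iv]; exact hivP ℓ hℓ)
      rw [hS'c, hcP ℓ hℓ] at hNew
      rw [hNew, hOld]
      rcases lt_trichotomy ℓ t with h | rfl | h
      · rw [hΔlt ℓ h, hcElt ℓ h, hElt ℓ h, hBle ℓ h.le, add_zero]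
      · rw [hΔt, hcEt, hEt, hBle ℓ le_rfl]
        have hn : S.ftime (js ℓ) ≤ S.c (js ℓ) := hnorm (js ℓ)
        rw [min_eq_right hn, min_eq_right (by linarith)]
        rw [max_eq_right (by linarith), max_eq_right (by linarith)]
        ring
      · have hc : S.c (js ℓ) = S.ftime (js ℓ) := (hsync ℓ (by omega) hℓ).symm
        rw [hΔgt ℓ h, hcEgt ℓ h, hEgt ℓ h, hBgt ℓ h, hc, min_self, min_self]
        have ha : a ℓ = S.ftime (js (ℓ - 1)) := hcons ℓ (by omega) hℓ
        have hf1 : S.ftime (js (ℓ - 1)) ≤ S.ftime (js ℓ) := hfmono ℓ (by omega) hℓ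
        have hδp := hδpos ℓ
        by_cases h' : ℓ = t + 1
        · subst h'
          simp only [Nat.add_sub_cancel] at ha hf1 ⊢
          rw [hEt, hδt, ha]
          rw [max_eq_right (by linarith), max_eq_right (by linarith)]
          ring
        · rw [hEgt (ℓ - 1) (by omega), hδ2 ℓ (by omega), ha]
          rw [max_eq_right (by linarith), max_eq_right (by linarith)]
          ring
    have hoN : ∀ j, (∀ ℓ < k, j ≠ js ℓ) → S'.overlap j = S.overlap j := by
      intro j hj
      unfold Schedule.overlap
      rw [hS'iv, hS'c, hivNg j hj, hcNg j hj]
    have hsum : S'.Omega w = S.Omega w + ∑ ℓ ∈ Finset.range k, w (js ℓ) * Δ ℓ := by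
      unfold Schedule.Omega
      have step1 : ∑ j, w j * S'.overlap j
          = ∑ j, (w j * S.overlap j + w j * (S'.overlap j - S.overlap j)) := by
        apply Finset.sum_congr rfl; intro j _; ring
      rw [step1, Finset.sum_add_distrib]
      congr 1
      have himg : ∑ j ∈ (Finset.range k).image js, w j * (S'.overlap j - S.overlap j)
          = ∑ j, w j * (S'.overlap j - S.overlap j) := by
        apply Finset.sum_subset (Finset.subset_univ _)
        intro j _ hj
        have hj' : ∀ ℓ < k, j ≠ js ℓ := by
          intro ℓ hℓ he
          exact hj (Finset.mem_image.mpr ⟨ℓ, Finset.mem_range.mpr hℓ, he.symm⟩)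
        rw [hoN j hj']; ring
      rw [← himg, Finset.sum_image
        (fun x hx y hy he => hinj x (Finset.mem_range.mp hx) y (Finset.mem_range.mp hy) he)]
      apply Finset.sum_congr rfl
      intro ℓ hℓ
      rw [hover ℓ (Finset.mem_range.mp hℓ)]
      ring
    rw [hsum]
    have hsplit : ∑ ℓ ∈ Finset.range k, w (js ℓ) * Δ ℓ
        = ∑ ℓ ∈ Finset.range (t + 1), w (js ℓ) * Δ ℓ
          + ∑ ℓ ∈ Finset.Ico (t + 1) k, w (js ℓ) * Δ ℓ :=
      (Finset.sum_range_add_sum_Ico _ (le_of_lt htk)).symm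
    rw [hsplit, Finset.sum_range_succ]
    have h0 : ∑ ℓ ∈ Finset.range t, w (js ℓ) * Δ ℓ = 0 := by
      apply Finset.sum_eq_zero; intro ℓ hℓ
      rw [hΔlt ℓ (Finset.mem_range.mp hℓ), mul_zero]
    rw [h0, hΔt, zero_add]
    have h1 : ∑ ℓ ∈ Finset.Ico (t + 1) k, w (js ℓ) * Δ ℓ
        = ε * ∑ ℓ ∈ Finset.Ico (t + 1) k, w (js ℓ) / 2 ^ (ℓ - (t + 1) + 1) := by
      rw [Finset.mul_sum]
      apply Finset.sum_congr rfl
      intro ℓ hℓ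
      have h' : t < ℓ := by have := (Finset.mem_Ico.mp hℓ).1; omega
      rw [hΔgt ℓ h']
      simp only [hδdef]
      ring
    rw [h1]
    ring
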